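/- Consider the dissipative Hamiltonian operator pencil P(λ) = λE − BQ. The following four conditions are equivalent: (a) every λ0 ∈ ℂ is an approximate singularity of P and there exist unit vectors x_n ∈ D(BQ) with E x_n → 0; (b) there exists λ0 ∈ ℂ with Re λ0 > 0 that is an approximate singularity of P; (c) there exist unit vectors x_n ∈ D(BQ) with E x_n → 0 and BQ x_n → 0; (d) P has a right approximate polynomial sequence. -/

import Mathlib

open Filter Topology
open scoped InnerProductSpace

noncomputable section

variable {X Y : Type*}
  [NormedAddCommGroup X] [InnerProductSpace ℂ X] [CompleteSpace X]
  [NormedAddCommGroup Y] [InnerProductSpace ℂ Y] [CompleteSpace Y]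

/-- Evaluation of the `X`-valued polynomial `p(λ) = ∑_{j=0}^k λ^j a_j` at `lam`. -/
def polyEval {Z : Type*} [AddCommGroup Z] [Module ℂ Z] (a : ℕ → Z) (k : ℕ) (lam : ℂ) : Z :=
  ∑ j ∈ Finset.range (k + 1), lam ^ j • a j

/-- Evaluation of the reversal `rev p(λ) = ∑_{j=0}^k λ^j a_{k-j}` at `lam`. -/
def revEval {Z : Type*} [AddCommGroup Z] [Module ℂ Z] (a : ℕ → Z) (k : ℕ) (lam : ℂ) : Z :=
  ∑ j ∈ Finset.range (k + 1), lam ^ j • a (k - j)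

/-- Application of the composition `BQ` (with domain `{x | Qx ∈ D(B)})`,
extended by `0` outside the domain. -/
noncomputable def BQap (Q : X →L[ℂ] Y) (B : Y →ₗ.[ℂ] Y) (x : X) : Y :=
  haveI := Classical.dec (Q x ∈ B.domain)
  if h : Q x ∈ B.domain then B ⟨Q x, h⟩ else 0

/-- `lam` is an approximate singularity of the pencil `P(λ) = λE - BQ`:
there are unit vectors `xₙ ∈ D(BQ)` with `(λE - BQ) xₙ → 0`. -/
def IsApproxSingularity (E Q : X →L[ℂ] Y) (B : Y →ₗ.[ℂ] Y) (lam : ℂ) : Prop :=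
  ∃ x : ℕ → X, (∀ n, Q (x n) ∈ B.domain) ∧ (∀ n, ‖x n‖ = 1) ∧
    Tendsto (fun n => lam • E (x n) - BQap Q B (x n)) atTop (𝓝 (0 : Y))

/-- The polynomials `p_n(λ) = ∑_{j=0}^{k n} λ^j (a n j)` form a right approximate
polynomial sequence for the pencil `λE - BQ`. -/
def IsRAPS (E Q : X →L[ℂ] Y) (B : Y →ₗ.[ℂ] Y) (k : ℕ → ℕ) (a : ℕ → ℕ → X) : Prop :=
  (∀ (n : ℕ) (lam : ℂ),
      Q (polyEval (a n) (k n) lam) ∈ B.domain ∧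
      Q (revEval (a n) (k n) lam) ∈ B.domain) ∧
  ∀ lam : ℂ,
    (∀ n, polyEval (a n) (k n) lam ≠ 0) ∧
    (∀ n, revEval (a n) (k n) lam ≠ 0) ∧
    ¬ Tendsto (fun n => ‖polyEval (a n) (k n) lam‖) atTop (𝓝 (0 : ℝ)) ∧
    ¬ Tendsto (fun n => ‖revEval (a n) (k n) lam‖) atTop (𝓝 (0 : ℝ)) ∧
    Tendsto (fun n => lam • E (polyEval (a n) (k n) lam) -
      BQap Q B (polyEval (a n) (k n) lam)) atTop (𝓝 (0 : Y)) ∧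
    Tendsto (fun n => lam • BQap Q B (revEval (a n) (k n) lam) -
      E (revEval (a n) (k n) lam)) atTop (𝓝 (0 : Y))

set_option linter.unusedSectionVars false

lemma BQap_eq (Q : X →L[ℂ] Y) (B : Y →ₗ.[ℂ] Y) (x : X) (h : Q x ∈ B.domain) :
    BQap Q B x = B ⟨Q x, h⟩ := dif_pos h

lemma BQap_smul (Q : X →L[ℂ] Y) (B : Y →ₗ.[ℂ] Y) (c : ℂ) (x : X) (h : Q x ∈ B.domain) :
    BQap Q B (c • x) = c • BQap Q B x := by
  have h2 : Q (c • x) ∈ B.domain := by rw [map_smul]; exact B.domain.smul_mem c h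
  rw [BQap_eq Q B _ h2, BQap_eq Q B _ h]
  have he : (⟨Q (c • x), h2⟩ : B.domain) = c • (⟨Q x, h⟩ : B.domain) := by
    ext; simp
  rw [he, B.map_smul]

lemma re_inner_symm {Z : Type*} [NormedAddCommGroup Z] [InnerProductSpace ℂ Z] (u v : Z) :
    (⟪u, v⟫_ℂ).re = (⟪v, u⟫_ℂ).re := by
  have h := congrArg Complex.re (inner_conj_symm u v)
  rw [← h]; exact Complex.conj_re _

lemma gen_cs (T : X →L[ℂ] X) (hT : IsSelfAdjoint T)
    (hTnn : ∀ x : X, 0 ≤ (⟪T x, x⟫_ℂ).re) (x : X) :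
    ‖T x‖ ^ 2 ≤ ‖T‖ * (⟪T x, x⟫_ℂ).re := by
  have hsym : ∀ u v : X, ⟪T u, v⟫_ℂ = ⟪u, T v⟫_ℂ := fun u v => hT.isSymmetric u v
  letI core : PreInnerProductSpace.Core ℂ X :=
    { inner := fun u v => ⟪u, T v⟫_ℂ
      conj_inner_symm := fun u v => by
        show (starRingEnd ℂ) ⟪v, T u⟫_ℂ = ⟪u, T v⟫_ℂ
        rw [← hsym v u, inner_conj_symm]
      re_inner_nonneg := fun u => by
        show 0 ≤ (⟪u, T u⟫_ℂ).re
        rw [← hsym u u]; exact hTnn u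
      add_left := fun u v w => by
        show ⟪u + v, T w⟫_ℂ = ⟪u, T w⟫_ℂ + ⟪v, T w⟫_ℂ
        simp [inner_add_left]
      smul_left := fun u v r => by
        show ⟪r • u, T v⟫_ℂ = (starRingEnd ℂ) r * ⟪u, T v⟫_ℂ
        simp [inner_smul_left]; ring }
  have cs : ‖⟪x, T (T x)⟫_ℂ‖ * ‖⟪T x, T x⟫_ℂ‖ ≤
      RCLike.re ⟪x, T x⟫_ℂ * RCLike.re ⟪T x, T (T x)⟫_ℂ :=
    @InnerProductSpace.Core.inner_mul_inner_self_le ℂ X _ _ _ core x (T x)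
  simp only [RCLike.re_to_complex] at cs
  rw [← hsym x (T x)] at cs
  have h1 : ‖⟪T x, T x⟫_ℂ‖ = ‖T x‖ ^ 2 := by
    rw [@inner_self_eq_norm_sq_to_K ℂ]
    simp [pow_two]
  rw [h1] at cs
  have h2 : (⟪x, T x⟫_ℂ).re = (⟪T x, x⟫_ℂ).re := by
    rw [hsym x x]
  rw [h2] at cs
  have h3 : (⟪T x, T (T x)⟫_ℂ).re ≤ ‖T‖ * (‖T x‖ * ‖T x‖) := by
    calc (⟪T x, T (T x)⟫_ℂ).re ≤ ‖⟪T x, T (T x)⟫_ℂ‖ := Complex.re_le_norm _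
      _ ≤ ‖T x‖ * ‖T (T x)‖ := norm_inner_le_norm _ _
      _ ≤ ‖T x‖ * (‖T‖ * ‖T x‖) := by
          gcongr; exact T.le_opNorm _
      _ = ‖T‖ * (‖T x‖ * ‖T x‖) := by ring
  rcases eq_or_ne (T x) 0 with h0 | h0
  · have := hTnn x
    have : (0:ℝ) ≤ ‖T‖ := norm_nonneg _
    rw [h0]; simp
  · have hn : 0 < ‖T x‖ := norm_pos_iff.mpr h0
    have hc : 0 ≤ (⟪T x, x⟫_ℂ).re := hTnn x
    have hp : 0 < ‖T x‖ * ‖T x‖ := mul_pos hn hn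
    have key : ‖T x‖ ^ 2 * (‖T x‖ * ‖T x‖) ≤ (‖T‖ * (⟪T x, x⟫_ℂ).re) * (‖T x‖ * ‖T x‖) := by
      calc ‖T x‖ ^ 2 * (‖T x‖ * ‖T x‖) = ‖T x‖ ^ 2 * ‖T x‖ ^ 2 := by ring
        _ ≤ (⟪T x, x⟫_ℂ).re * (⟪T x, T (T x)⟫_ℂ).re := cs
        _ ≤ (⟪T x, x⟫_ℂ).re * (‖T‖ * (‖T x‖ * ‖T x‖)) := by
            exact mul_le_mul_of_nonneg_left h3 hc
        _ = (‖T‖ * (⟪T x, x⟫_ℂ).re) * (‖T x‖ * ‖T x‖) := by ring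
    exact le_of_mul_le_mul_right key hp

lemma key_lemma (E Q : X →L[ℂ] Y) (B : Y →ₗ.[ℂ] Y)
    (hQinv : ∃ Qi : Y →L[ℂ] X, (∀ x, Qi (Q x) = x) ∧ (∀ y, Q (Qi y) = y))
    (hQE : IsSelfAdjoint ((ContinuousLinearMap.adjoint Q).comp E))
    (hQEnn : ∀ x : X, 0 ≤ (⟪((ContinuousLinearMap.adjoint Q).comp E) x, x⟫_ℂ).re)
    (hBdiss : ∀ y : B.domain, (⟪B y, (y : Y)⟫_ℂ).re ≤ 0)
    {lam : ℂ} (hlam : 0 < lam.re) (x : ℕ → X)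
    (hdom : ∀ n, Q (x n) ∈ B.domain) (hnorm : ∀ n, ‖x n‖ = 1)
    (htend : Tendsto (fun n => lam • E (x n) - BQap Q B (x n)) atTop (𝓝 (0 : Y))) :
    Tendsto (fun n => E (x n)) atTop (𝓝 (0 : Y)) ∧
      Tendsto (fun n => BQap Q B (x n)) atTop (𝓝 (0 : Y)) := by
  set T := (ContinuousLinearMap.adjoint Q).comp E with hTdef
  have hsym : ∀ u v : X, ⟪T u, v⟫_ℂ = ⟪u, T v⟫_ℂ := fun u v => hQE.isSymmetric u v
  set y : ℕ → Y := fun n => lam • E (x n) - BQap Q B (x n) with hydef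
  have hynorm : Tendsto (fun n => ‖y n‖) atTop (𝓝 0) :=
    tendsto_zero_iff_norm_tendsto_zero.mp htend
  set r : ℕ → ℝ := fun n => (⟪T (x n), x n⟫_ℂ).re with hrdef
  have hr0 : ∀ n, 0 ≤ r n := fun n => hQEnn (x n)
  -- the inner product ⟪T z, z⟫ is real
  have hreal : ∀ z : X, ⟪T z, z⟫_ℂ = ((⟪T z, z⟫_ℂ).re : ℂ) := by
    intro z
    have h1 : (starRingEnd ℂ) ⟪T z, z⟫_ℂ = ⟪T z, z⟫_ℂ := by
      rw [inner_conj_symm, hsym]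
    exact (Complex.conj_eq_iff_re.mp h1).symm
  -- main estimate
  have hest : ∀ n, lam.re * r n ≤ (⟪Q (x n), y n⟫_ℂ).re := by
    intro n
    have hBz : BQap Q B (x n) = B ⟨Q (x n), hdom n⟩ := BQap_eq Q B _ (hdom n)
    have hinner : ⟪Q (x n), y n⟫_ℂ =
        lam * ⟪Q (x n), E (x n)⟫_ℂ - ⟪Q (x n), B ⟨Q (x n), hdom n⟩⟫_ℂ := by
      rw [hydef]
      simp only [hBz, inner_sub_right, inner_smul_right]
    have hQE_eq : ⟪Q (x n), E (x n)⟫_ℂ = ⟪T (x n), x n⟫_ℂ := by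
      have h1 : ⟪T (x n), x n⟫_ℂ = ⟪E (x n), Q (x n)⟫_ℂ := by
        rw [hTdef]
        simp [ContinuousLinearMap.adjoint_inner_left]
      calc ⟪Q (x n), E (x n)⟫_ℂ = (starRingEnd ℂ) ⟪E (x n), Q (x n)⟫_ℂ :=
            (inner_conj_symm _ _).symm
        _ = (starRingEnd ℂ) ⟪T (x n), x n⟫_ℂ := by rw [h1]
        _ = ⟪T (x n), x n⟫_ℂ := by rw [hreal (x n)]; exact Complex.conj_ofReal _
    have hdissn : (⟪Q (x n), B ⟨Q (x n), hdom n⟩⟫_ℂ).re ≤ 0 := by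
      have h2 := hBdiss ⟨Q (x n), hdom n⟩
      rw [re_inner_symm]; exact h2
    have hmul : (lam * ⟪Q (x n), E (x n)⟫_ℂ).re = lam.re * r n := by
      rw [hQE_eq, hreal (x n)]
      simp [Complex.mul_re, hrdef]
    rw [hinner, Complex.sub_re, hmul]
    linarith
  have hbound : ∀ n, (⟪Q (x n), y n⟫_ℂ).re ≤ ‖Q‖ * ‖y n‖ := by
    intro n
    calc (⟪Q (x n), y n⟫_ℂ).re ≤ ‖⟪Q (x n), y n⟫_ℂ‖ := Complex.re_le_norm _
      _ ≤ ‖Q (x n)‖ * ‖y n‖ := norm_inner_le_norm _ _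
      _ ≤ ‖Q‖ * ‖y n‖ := by
          gcongr
          calc ‖Q (x n)‖ ≤ ‖Q‖ * ‖x n‖ := Q.le_opNorm _
            _ = ‖Q‖ := by rw [hnorm n, mul_one]
  -- r n → 0
  have hrt : Tendsto r atTop (𝓝 0) := by
    have hsq : Tendsto (fun n => lam.re⁻¹ * (‖Q‖ * ‖y n‖)) atTop (𝓝 0) := by
      have := (hynorm.const_mul ‖Q‖).const_mul lam.re⁻¹
      simpa using this
    refine squeeze_zero hr0 (fun n => ?_) hsq
    have h1 : lam.re * r n ≤ ‖Q‖ * ‖y n‖ := le_trans (hest n) (hbound n)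
    rw [inv_mul_eq_div, le_div_iff₀ hlam, mul_comm]
    exact h1
  -- ‖T (x n)‖ → 0
  have hTsq : Tendsto (fun n => ‖T (x n)‖ ^ 2) atTop (𝓝 0) := by
    refine squeeze_zero (fun n => by positivity) (fun n => gen_cs T hQE hQEnn (x n))
      ?_
    simpa using hrt.const_mul ‖T‖
  have hTx : Tendsto (fun n => T (x n)) atTop (𝓝 0) := by
    rw [tendsto_zero_iff_norm_tendsto_zero]
    have h := (Real.continuous_sqrt.tendsto 0).comp hTsq
    simp only [Function.comp_def, Real.sqrt_zero] at h
    convert h using 2 with n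
    rw [Real.sqrt_sq (norm_nonneg _)]
  -- E (x n) → 0
  obtain ⟨Qi, hQi1, hQi2⟩ := hQinv
  have hcomp : ∀ z : X, (ContinuousLinearMap.adjoint Qi) (T z) = E z := by
    intro z
    have h1 : Q.comp Qi = ContinuousLinearMap.id ℂ Y := by
      ext v; simp [hQi2]
    have h2 : (ContinuousLinearMap.adjoint Qi).comp (ContinuousLinearMap.adjoint Q) =
        ContinuousLinearMap.id ℂ Y := by
      rw [← ContinuousLinearMap.adjoint_comp, h1, ContinuousLinearMap.adjoint_id]
    calc (ContinuousLinearMap.adjoint Qi) (T z)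
        = ((ContinuousLinearMap.adjoint Qi).comp (ContinuousLinearMap.adjoint Q)) (E z) := rfl
      _ = E z := by rw [h2]; rfl
  have hE : Tendsto (fun n => E (x n)) atTop (𝓝 (0 : Y)) := by
    have h := ((ContinuousLinearMap.adjoint Qi).continuous.tendsto 0).comp hTx
    simp only [Function.comp_def, hcomp, map_zero] at h
    exact h
  refine ⟨hE, ?_⟩
  have hB : Tendsto (fun n => lam • E (x n) - y n) atTop (𝓝 (0 : Y)) := by
    have := (hE.const_smul lam).sub htend
    simpa using this
  convert hB using 2 with n
  rw [hydef]; simp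

/-- For the dissipative Hamiltonian pencil `P(λ) = λE - BQ` the following are
equivalent: (a) every `λ0 ∈ ℂ` is an approximate singularity and `∞` is an approximate
singularity; (b) some `λ0` with `Re λ0 > 0` is an approximate singularity; (c) there are
unit vectors `xₙ ∈ D(BQ)` with `E xₙ → 0` and `BQ xₙ → 0`; (d) `P` has a right
approximate polynomial sequence. -/
theorem stmt_16 (E Q : X →L[ℂ] Y) (B : Y →ₗ.[ℂ] Y)
    (hQinv : ∃ Qi : Y →L[ℂ] X, (∀ x, Qi (Q x) = x) ∧ (∀ y, Q (Qi y) = y))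
    (hQE : IsSelfAdjoint ((ContinuousLinearMap.adjoint Q).comp E))
    (hQEnn : ∀ x : X, 0 ≤ (⟪((ContinuousLinearMap.adjoint Q).comp E) x, x⟫_ℂ).re)
    (hBdense : Dense (B.domain : Set Y)) (hBclosed : IsClosed (B.graph : Set (Y × Y)))
    (hBdiss : ∀ y : B.domain, (⟪B y, (y : Y)⟫_ℂ).re ≤ 0) :
    (((∀ lam0 : ℂ, IsApproxSingularity E Q B lam0) ∧
        (∃ x : ℕ → X, (∀ n, Q (x n) ∈ B.domain) ∧ (∀ n, ‖x n‖ = 1) ∧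
          Tendsto (fun n => E (x n)) atTop (𝓝 (0 : Y)))) ↔
      (∃ lam0 : ℂ, 0 < lam0.re ∧ IsApproxSingularity E Q B lam0)) ∧
    ((∃ lam0 : ℂ, 0 < lam0.re ∧ IsApproxSingularity E Q B lam0) ↔
      (∃ x : ℕ → X, (∀ n, Q (x n) ∈ B.domain) ∧ (∀ n, ‖x n‖ = 1) ∧
        Tendsto (fun n => E (x n)) atTop (𝓝 (0 : Y)) ∧
        Tendsto (fun n => BQap Q B (x n)) atTop (𝓝 (0 : Y)))) ∧
    ((∃ x : ℕ → X, (∀ n, Q (x n) ∈ B.domain) ∧ (∀ n, ‖x n‖ = 1) ∧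
        Tendsto (fun n => E (x n)) atTop (𝓝 (0 : Y)) ∧
        Tendsto (fun n => BQap Q B (x n)) atTop (𝓝 (0 : Y))) ↔
      (∃ (k : ℕ → ℕ) (a : ℕ → ℕ → X), IsRAPS E Q B k a)) := by
  have hbc : (∃ lam0 : ℂ, 0 < lam0.re ∧ IsApproxSingularity E Q B lam0) →
      (∃ x : ℕ → X, (∀ n, Q (x n) ∈ B.domain) ∧ (∀ n, ‖x n‖ = 1) ∧
        Tendsto (fun n => E (x n)) atTop (𝓝 (0 : Y)) ∧
        Tendsto (fun n => BQap Q B (x n)) atTop (𝓝 (0 : Y))) := by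
    rintro ⟨lam0, hlam0, x, hdom, hnorm, ht⟩
    obtain ⟨hE, hB⟩ := key_lemma E Q B hQinv hQE hQEnn hBdiss hlam0 x hdom hnorm ht
    exact ⟨x, hdom, hnorm, hE, hB⟩
  have hca : ∀ (x : ℕ → X), (∀ n, Q (x n) ∈ B.domain) → (∀ n, ‖x n‖ = 1) →
      Tendsto (fun n => E (x n)) atTop (𝓝 (0 : Y)) →
      Tendsto (fun n => BQap Q B (x n)) atTop (𝓝 (0 : Y)) →
      ∀ lam0 : ℂ, IsApproxSingularity E Q B lam0 := by
    intro x hdom hnorm hE hB lam0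
    refine ⟨x, hdom, hnorm, ?_⟩
    have := (hE.const_smul lam0).sub hB
    simpa using this
  have hcd : (∃ x : ℕ → X, (∀ n, Q (x n) ∈ B.domain) ∧ (∀ n, ‖x n‖ = 1) ∧
        Tendsto (fun n => E (x n)) atTop (𝓝 (0 : Y)) ∧
        Tendsto (fun n => BQap Q B (x n)) atTop (𝓝 (0 : Y))) →
      ∃ (k : ℕ → ℕ) (a : ℕ → ℕ → X), IsRAPS E Q B k a := by
    rintro ⟨x, hdom, hnorm, hE, hB⟩
    have hx0 : ∀ n, x n ≠ 0 := by
      intro n h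
      have := hnorm n
      rw [h, norm_zero] at this
      exact zero_ne_one this
    have hpe : ∀ (n : ℕ) (lam : ℂ), polyEval (fun _ => x n) 0 lam = x n := by
      intro n lam; simp [polyEval]
    have hre : ∀ (n : ℕ) (lam : ℂ), revEval (fun _ => x n) 0 lam = x n := by
      intro n lam; simp [revEval]
    refine ⟨fun _ => 0, fun n _ => x n,
      fun n lam => ⟨by rw [hpe]; exact hdom n, by rw [hre]; exact hdom n⟩, fun lam => ?_⟩
    refine ⟨fun n => by rw [hpe]; exact hx0 n, fun n => by rw [hre]; exact hx0 n, ?_, ?_, ?_, ?_⟩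
    · simp only [hpe, hnorm]
      intro h
      exact one_ne_zero (tendsto_nhds_unique tendsto_const_nhds h)
    · simp only [hre, hnorm]
      intro h
      exact one_ne_zero (tendsto_nhds_unique tendsto_const_nhds h)
    · simp only [hpe]
      simpa using (hE.const_smul lam).sub hB
    · simp only [hre]
      simpa using (hB.const_smul lam).sub hE
  have hdb : (∃ (k : ℕ → ℕ) (a : ℕ → ℕ → X), IsRAPS E Q B k a) →
      (∃ lam0 : ℂ, 0 < lam0.re ∧ IsApproxSingularity E Q B lam0) := by
    rintro ⟨k, a, hdoms, hprops⟩
    obtain ⟨hne, -, hnT, -, hP, -⟩ := hprops 1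
    set p : ℕ → X := fun n => polyEval (a n) (k n) 1 with hp
    rw [Metric.tendsto_atTop] at hnT
    push_neg at hnT
    obtain ⟨ε, hε, hfreq⟩ := hnT
    obtain ⟨φ, hφ, hφ2⟩ :=
      Filter.extraction_of_frequently_atTop (Filter.frequently_atTop.mpr hfreq)
    have hεle : ∀ m, ε ≤ ‖p (φ m)‖ := by
      intro m
      have h := hφ2 m
      rwa [Real.dist_eq, sub_zero, abs_of_nonneg (norm_nonneg _)] at h
    have hpne : ∀ m, p (φ m) ≠ 0 := fun m => hne (φ m)
    set c : ℕ → ℂ := fun m => ((‖p (φ m)‖⁻¹ : ℝ) : ℂ) with hcdef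
    set x : ℕ → X := fun m => c m • p (φ m) with hxd
    have hcnorm : ∀ m, ‖c m‖ = ‖p (φ m)‖⁻¹ := by
      intro m
      simp only [hcdef, Complex.norm_real, Real.norm_eq_abs, abs_inv, abs_norm]
    have hxnorm : ∀ m, ‖x m‖ = 1 := by
      intro m
      rw [hxd]
      simp only [norm_smul, hcnorm]
      exact inv_mul_cancel₀ (norm_ne_zero_iff.mpr (hpne m))
    have hxdom : ∀ m, Q (x m) ∈ B.domain := by
      intro m
      rw [hxd]
      simp only [map_smul]
      exact B.domain.smul_mem _ ((hdoms (φ m) 1).1)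
    have hq : Tendsto (fun m => ‖(1:ℂ) • E (p (φ m)) - BQap Q B (p (φ m))‖)
        atTop (𝓝 (0:ℝ)) := by
      have h := hP.comp hφ.tendsto_atTop
      rw [tendsto_zero_iff_norm_tendsto_zero] at h
      exact h
    refine ⟨1, by norm_num, x, hxdom, hxnorm, ?_⟩
    rw [tendsto_zero_iff_norm_tendsto_zero]
    have heq : ∀ m, (1:ℂ) • E (x m) - BQap Q B (x m) =
        c m • ((1:ℂ) • E (p (φ m)) - BQap Q B (p (φ m))) := by
      intro m
      rw [hxd]
      simp only [one_smul, map_smul, BQap_smul Q B _ _ ((hdoms (φ m) 1).1), smul_sub]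
      rw [BQap_smul Q B (c m) (p (φ m)) ((hdoms (φ m) 1).1)]
    have hg : Tendsto (fun m => ε⁻¹ * ‖(1:ℂ) • E (p (φ m)) - BQap Q B (p (φ m))‖)
        atTop (𝓝 (0:ℝ)) := by simpa using hq.const_mul ε⁻¹
    refine squeeze_zero (fun m => norm_nonneg _) (fun m => ?_) hg
    rw [heq m, norm_smul, hcnorm]
    have h1 : ‖p (φ m)‖⁻¹ ≤ ε⁻¹ := by
      gcongr
      exact hεle m
    exact mul_le_mul_of_nonneg_right h1 (norm_nonneg _)
  refine ⟨⟨?_, ?_⟩, ⟨hbc, ?_⟩, ⟨hcd, ?_⟩⟩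
  · rintro ⟨hall, -⟩
    exact ⟨1, by norm_num, hall 1⟩
  · intro hb
    obtain ⟨x, hdom, hnorm, hE, hB⟩ := hbc hb
    exact ⟨hca x hdom hnorm hE hB, ⟨x, hdom, hnorm, hE⟩⟩
  · rintro ⟨x, hdom, hnorm, hE, hB⟩
    exact ⟨1, by norm_num, hca x hdom hnorm hE hB 1⟩
  · intro hd
    exact hbc (hdb hd)
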